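/- Let P* be an optimal tuple of n points in [0,1]^2. Then every admissible up-shift and every admissible right-shift of P* does not increase the star discrepancy: d*(up(P*,i,δ)) ≤ d*(P*) and d*(ri(P*,i,δ)) ≤ d*(P*); in particular, the shifted tuples are again optimal. -/

import Mathlib

open Finset

noncomputable section

open scoped Classical

/-- Number of points of the tuple `P` lying in the open anchored box `[0,q)`. -/
def openCount {n d : ℕ} (P : Fin n → Fin d → ℝ) (q : Fin d → ℝ) : ℕ :=
  (Finset.univ.filter (fun i : Fin n => ∀ j, P i j < q j)).card

/-- Number of points of the tuple `P` lying in the closed anchored box `[0,q]`. -/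
def closedCount {n d : ℕ} (P : Fin n → Fin d → ℝ) (q : Fin d → ℝ) : ℕ :=
  (Finset.univ.filter (fun i : Fin n => ∀ j, P i j ≤ q j)).card

/-- Open local discrepancy `δ(P,q) = ∏ q_j − #{i : x⁽ⁱ⁾ ∈ [0,q)}/n`. -/
def openDisc {n d : ℕ} (P : Fin n → Fin d → ℝ) (q : Fin d → ℝ) : ℝ :=
  (∏ j, q j) - (openCount P q : ℝ) / n

/-- Closed local discrepancy `δ̄(P,q) = #{i : x⁽ⁱ⁾ ∈ [0,q]}/n − ∏ q_j`. -/
def closedDisc {n d : ℕ} (P : Fin n → Fin d → ℝ) (q : Fin d → ℝ) : ℝ :=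
  (closedCount P q : ℝ) / n - ∏ j, q j

/-- `max(δ(P,q), δ̄(P,q))`. -/
def localDisc {n d : ℕ} (P : Fin n → Fin d → ℝ) (q : Fin d → ℝ) : ℝ :=
  max (openDisc P q) (closedDisc P q)

/-- The L∞ star discrepancy `d*(P) = sup_{q ∈ [0,1]^d} max(δ(P,q), δ̄(P,q))`. -/
def starDisc {n d : ℕ} (P : Fin n → Fin d → ℝ) : ℝ :=
  sSup {r : ℝ | ∃ q : Fin d → ℝ, (∀ j, q j ∈ Set.Icc (0:ℝ) 1) ∧ r = localDisc P q}

/-- A tuple of `n` points in `[0,1]^2` is optimal if its star discrepancy is minimal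
among all `n`-point tuples in `[0,1]^2`. -/
def IsOptimal {n : ℕ} (P : Fin n → Fin 2 → ℝ) : Prop :=
  (∀ i j, P i j ∈ Set.Icc (0:ℝ) 1) ∧
    ∀ Q : Fin n → Fin 2 → ℝ, (∀ i j, Q i j ∈ Set.Icc (0:ℝ) 1) → starDisc P ≤ starDisc Q

/-- Up-shift: replace `x⁽ⁱ⁾` by `(x⁽ⁱ⁾₁, x⁽ⁱ⁾₂ + δ)`. -/
def upShift {n : ℕ} (P : Fin n → Fin 2 → ℝ) (i : Fin n) (δ : ℝ) : Fin n → Fin 2 → ℝ :=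
  Function.update P i (fun j => P i j + if j = (1 : Fin 2) then δ else 0)

/-- Right-shift: replace `x⁽ⁱ⁾` by `(x⁽ⁱ⁾₁ + δ, x⁽ⁱ⁾₂)`. -/
def rightShift {n : ℕ} (P : Fin n → Fin 2 → ℝ) (i : Fin n) (δ : ℝ) : Fin n → Fin 2 → ℝ :=
  Function.update P i (fun j => P i j + if j = (0 : Fin 2) then δ else 0)

/-- Down-shift: replace `x⁽ⁱ⁾` by `(x⁽ⁱ⁾₁, x⁽ⁱ⁾₂ − δ)`. -/
def downShift {n : ℕ} (P : Fin n → Fin 2 → ℝ) (i : Fin n) (δ : ℝ) : Fin n → Fin 2 → ℝ :=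
  Function.update P i (fun j => P i j - if j = (1 : Fin 2) then δ else 0)

/-- Left-shift: replace `x⁽ⁱ⁾` by `(x⁽ⁱ⁾₁ − δ, x⁽ⁱ⁾₂)`. -/
def leftShift {n : ℕ} (P : Fin n → Fin 2 → ℝ) (i : Fin n) (δ : ℝ) : Fin n → Fin 2 → ℝ :=
  Function.update P i (fun j => P i j - if j = (0 : Fin 2) then δ else 0)

/-- An up-shift of `x⁽ⁱ⁾` by `δ` is admissible if some other point lies (weakly) below-left
of `x⁽ⁱ⁾` and `δ ≤ 1/n − min{x⁽ⁱ⁾₂ − x⁽ᵏ⁾₂ : k ≠ i, x⁽ᵏ⁾ ≤ x⁽ⁱ⁾}`. -/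
def AdmissibleUp {n : ℕ} (P : Fin n → Fin 2 → ℝ) (i : Fin n) (δ : ℝ) : Prop :=
  (∃ k, k ≠ i ∧ ∀ j, P k j ≤ P i j) ∧
    δ ≤ 1 / n - sInf {t : ℝ | ∃ k, k ≠ i ∧ (∀ j, P k j ≤ P i j) ∧ t = P i 1 - P k 1}

/-- Admissibility of a right-shift (same as `AdmissibleUp` with the first coordinate). -/
def AdmissibleRight {n : ℕ} (P : Fin n → Fin 2 → ℝ) (i : Fin n) (δ : ℝ) : Prop :=
  (∃ k, k ≠ i ∧ ∀ j, P k j ≤ P i j) ∧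
    δ ≤ 1 / n - sInf {t : ℝ | ∃ k, k ≠ i ∧ (∀ j, P k j ≤ P i j) ∧ t = P i 0 - P k 0}

/-- A down-shift of `x⁽ⁱ⁾` by `δ` is admissible if some other point lies (weakly) above-right
of `x⁽ⁱ⁾` and `δ ≤ 1/n − min{x⁽ᵏ⁾₂ − x⁽ⁱ⁾₂ : k ≠ i, x⁽ᵏ⁾ ≥ x⁽ⁱ⁾}`. -/
def AdmissibleDown {n : ℕ} (P : Fin n → Fin 2 → ℝ) (i : Fin n) (δ : ℝ) : Prop :=
  (∃ k, k ≠ i ∧ ∀ j, P i j ≤ P k j) ∧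
    δ ≤ 1 / n - sInf {t : ℝ | ∃ k, k ≠ i ∧ (∀ j, P i j ≤ P k j) ∧ t = P k 1 - P i 1}

/-- Admissibility of a left-shift (same as `AdmissibleDown` with the first coordinate). -/
def AdmissibleLeft {n : ℕ} (P : Fin n → Fin 2 → ℝ) (i : Fin n) (δ : ℝ) : Prop :=
  (∃ k, k ≠ i ∧ ∀ j, P i j ≤ P k j) ∧
    δ ≤ 1 / n - sInf {t : ℝ | ∃ k, k ≠ i ∧ (∀ j, P i j ≤ P k j) ∧ t = P k 0 - P i 0}

lemma starDisc_bdd {n d : ℕ} (P : Fin n → Fin d → ℝ) :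
    BddAbove {r : ℝ | ∃ q : Fin d → ℝ, (∀ j, q j ∈ Set.Icc (0:ℝ) 1) ∧ r = localDisc P q} := by
  refine ⟨1, ?_⟩
  rintro r ⟨q, hq, rfl⟩
  have hprod0 : (0:ℝ) ≤ ∏ j, q j := Finset.prod_nonneg fun j _ => (hq j).1
  have hprod1 : (∏ j, q j) ≤ 1 := Finset.prod_le_one (fun j _ => (hq j).1) (fun j _ => (hq j).2)
  have hcount0 : (0:ℝ) ≤ (openCount P q : ℝ) / n := by positivity
  have hcle : closedCount P q ≤ n := by
    simpa [closedCount] using Finset.card_filter_le (Finset.univ : Finset (Fin n)) _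
  have hcount1 : (closedCount P q : ℝ) / n ≤ 1 := by
    rcases Nat.eq_zero_or_pos n with h | h
    · simp [h]
    · rw [div_le_one (by exact_mod_cast h)]; exact_mod_cast hcle
  refine max_le (by unfold openDisc; linarith) (by unfold closedDisc; linarith)

lemma localDisc_le_starDisc {n d : ℕ} (P : Fin n → Fin d → ℝ) (q : Fin d → ℝ)
    (hq : ∀ j, q j ∈ Set.Icc (0:ℝ) 1) : localDisc P q ≤ starDisc P :=
  le_csSup (starDisc_bdd P) ⟨q, hq, rfl⟩

lemma shift_le {n : ℕ} (P : Fin n → Fin 2 → ℝ) (hP : ∀ i j, P i j ∈ Set.Icc (0:ℝ) 1)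
    (i : Fin n) (δ : ℝ) (hδ : 0 < δ) (c c' : Fin 2) (hcc : c' ≠ c)
    (hprod : ∀ r : Fin 2 → ℝ, ∏ j, r j = r c * r c')
    (hjc : ∀ j : Fin 2, j ≠ c → j = c')
    (P' : Fin n → Fin 2 → ℝ)
    (hP'i : ∀ j, P' i j = P i j + if j = c then δ else 0)
    (hP'm : ∀ m, m ≠ i → P' m = P m)
    (k : Fin n) (hki : k ≠ i) (hk : ∀ j, P k j ≤ P i j)
    (hkc : P i c - P k c ≤ 1 / (n:ℝ) - δ) :
    starDisc P' ≤ starDisc P := by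
  have hn0 : 0 < n := i.pos
  have hn : (0:ℝ) < (n:ℝ) := by exact_mod_cast hn0
  have hle : ∀ j, P i j ≤ P' i j := by
    intro j; rw [hP'i j]; split <;> linarith
  refine csSup_le ⟨localDisc P' (fun _ => 0), ⟨fun _ => 0, fun j => by simp, rfl⟩⟩ ?_
  rintro r ⟨q, hq, rfl⟩
  refine max_le ?_ ?_
  · -- open part
    by_cases hi2 : ∀ j, P' i j < q j
    · have heq : openCount P' q = openCount P q := by
        unfold openCount
        congr 1
        apply Finset.filter_congr
        intro m _
        by_cases hm : m = i
        · rw [hm]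
          exact iff_of_true hi2 (fun j => lt_of_le_of_lt (hle j) (hi2 j))
        · rw [hP'm m hm]
      have : openDisc P' q = openDisc P q := by unfold openDisc; rw [heq]
      rw [this]
      exact le_trans (le_max_left _ _) (localDisc_le_starDisc P q hq)
    · by_cases hi1 : ∀ j, P i j < q j
      · -- hard case
        have hic : P i c < q c := hi1 c
        have hqc : q c ≤ P i c + δ := by
          push_neg at hi2
          obtain ⟨j, hj⟩ := hi2
          by_cases hjceq : j = c
          · rw [hjceq] at hj; rw [hP'i c, if_pos rfl] at hj; linarith
          · exfalso
            rw [hP'i j, if_neg hjceq] at hj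
            have := hi1 j; linarith
        -- new count = old count - 1
        have hiF : i ∈ Finset.univ.filter (fun m : Fin n => ∀ j, P m j < q j) := by
          simp [hi1]
        have hkF : k ∈ Finset.univ.filter (fun m : Fin n => ∀ j, P m j < q j) := by
          simp only [Finset.mem_filter, Finset.mem_univ, true_and]
          exact fun j => lt_of_le_of_lt (hk j) (hi1 j)
        have hset : Finset.univ.filter (fun m : Fin n => ∀ j, P' m j < q j)
            = (Finset.univ.filter (fun m : Fin n => ∀ j, P m j < q j)).erase i := by
          ext m
          simp only [Finset.mem_filter, Finset.mem_univ, true_and, Finset.mem_erase]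
          constructor
          · intro hm
            have hmi : m ≠ i := by rintro rfl; exact hi2 hm
            rw [hP'm m hmi] at hm
            exact ⟨hmi, hm⟩
          · rintro ⟨hmi, hm⟩
            rw [hP'm m hmi]; exact hm
        have hcount' : openCount P' q + 1 = openCount P q := by
          unfold openCount
          rw [hset]
          exact Finset.card_erase_add_one hiF
        -- the comparison box
        set qt : Fin 2 → ℝ := Function.update q c (P k c) with hqt
        have hqtc : qt c = P k c := Function.update_self c _ q
        have hqtc' : qt c' = q c' := Function.update_of_ne hcc _ q
        have hqtbox : ∀ j, qt j ∈ Set.Icc (0:ℝ) 1 := by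
          intro j
          by_cases hj : j = c
          · rw [hj, hqtc]; exact hP k c
          · rw [hqt, Function.update_of_ne hj]; exact hq j
        have hsub : Finset.univ.filter (fun m : Fin n => ∀ j, P m j < qt j)
            ⊆ (Finset.univ.filter (fun m : Fin n => ∀ j, P m j < q j)) \ {i, k} := by
          intro m hm
          simp only [Finset.mem_filter, Finset.mem_univ, true_and] at hm
          have hmq : ∀ j, P m j < q j := by
            intro j
            by_cases hj : j = c
            · rw [hj]
              have h5 := hm c; rw [hqtc] at h5
              exact lt_trans (lt_of_lt_of_le h5 (hk c)) hic
            · have h5 := hm j; rwa [hqt, Function.update_of_ne hj] at h5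
          have hmi : m ≠ i := by
            rintro rfl
            have := hm c; rw [hqtc] at this
            exact absurd (hk c) (not_le.mpr this)
          have hmk : m ≠ k := by
            rintro rfl
            have := hm c; rw [hqtc] at this
            exact lt_irrefl _ this
          simp only [Finset.mem_sdiff, Finset.mem_filter, Finset.mem_univ, true_and,
            Finset.mem_insert, Finset.mem_singleton]
          exact ⟨hmq, by tauto⟩
        have hik : i ≠ k := Ne.symm hki
        have hpairsub : ({i, k} : Finset (Fin n)) ⊆
            Finset.univ.filter (fun m : Fin n => ∀ j, P m j < q j) := by
          intro m hm
          simp only [Finset.mem_insert, Finset.mem_singleton] at hm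
          rcases hm with rfl | rfl
          · exact hiF
          · exact hkF
        have hcard2 : openCount P qt + 2 ≤ openCount P q := by
          have h1 := Finset.card_le_card hsub
          rw [Finset.card_sdiff_of_subset hpairsub, Finset.card_pair hik] at h1
          have h2 := Finset.card_le_card hpairsub
          rw [Finset.card_pair hik] at h2
          unfold openCount
          omega
        -- real arithmetic
        have hm1 : (openCount P' q : ℝ) = (openCount P q : ℝ) - 1 := by
          have := hcount'
          push_cast [← this]
          ring
        have hqdiff : q c - P k c ≤ 1 / (n:ℝ) := by linarith
        have hqc'0 : (0:ℝ) ≤ q c' := (hq c').1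
        have hqc'1 : q c' ≤ 1 := (hq c').2
        have hmul : (q c - P k c) * q c' ≤ 1 / (n:ℝ) := by
          rcases le_or_gt (q c - P k c) 0 with h | h
          · have : (q c - P k c) * q c' ≤ 0 := mul_nonpos_of_nonpos_of_nonneg h hqc'0
            have : (0:ℝ) ≤ 1 / (n:ℝ) := by positivity
            linarith
          · nlinarith
        have hcast2 : (openCount P qt : ℝ) + 2 ≤ (openCount P q : ℝ) := by
          exact_mod_cast hcard2
        have hdivle : (0:ℝ) ≤ ((openCount P q : ℝ) - 1 - (openCount P qt : ℝ) - 1) / n :=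
          div_nonneg (by linarith) hn.le
        have hfinal : openDisc P' q ≤ openDisc P qt := by
          unfold openDisc
          rw [hprod q, hprod qt, hqtc, hqtc', hm1]
          have hexp : ((openCount P q : ℝ) - 1 - (openCount P qt : ℝ) - 1) / n
              = ((openCount P q : ℝ) - 1) / n - (openCount P qt : ℝ)/n - 1/n := by ring
          rw [hexp] at hdivle
          nlinarith
        exact hfinal.trans (le_trans (le_max_left _ _) (localDisc_le_starDisc P qt hqtbox))
      · -- i was already outside
        have heq : openCount P' q = openCount P q := by
          unfold openCount
          congr 1
          apply Finset.filter_congr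
          intro m _
          by_cases hm : m = i
          · rw [hm]; exact iff_of_false hi2 hi1
          · rw [hP'm m hm]
        have : openDisc P' q = openDisc P q := by unfold openDisc; rw [heq]
        rw [this]
        exact le_trans (le_max_left _ _) (localDisc_le_starDisc P q hq)
  · -- closed part
    have hsub : Finset.univ.filter (fun m : Fin n => ∀ j, P' m j ≤ q j)
        ⊆ Finset.univ.filter (fun m : Fin n => ∀ j, P m j ≤ q j) := by
      intro m hm
      simp only [Finset.mem_filter, Finset.mem_univ, true_and] at hm ⊢
      by_cases hmi : m = i
      · intro j; rw [hmi]; rw [hmi] at hm; exact le_trans (hle j) (hm j)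
      · rwa [← hP'm m hmi]
    have hle' : closedDisc P' q ≤ closedDisc P q := by
      unfold closedDisc closedCount
      have := Finset.card_le_card hsub
      have hc : ((Finset.univ.filter (fun m : Fin n => ∀ j, P' m j ≤ q j)).card : ℝ)
          ≤ ((Finset.univ.filter (fun m : Fin n => ∀ j, P m j ≤ q j)).card : ℝ) := by
        exact_mod_cast this
      have hd : ((Finset.univ.filter (fun m : Fin n => ∀ j, P' m j ≤ q j)).card : ℝ) / n
          ≤ ((Finset.univ.filter (fun m : Fin n => ∀ j, P m j ≤ q j)).card : ℝ) / n := by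
        gcongr
      linarith
    exact hle'.trans (le_trans (le_max_right _ _) (localDisc_le_starDisc P q hq))
lemma shift_main {n : ℕ} (P : Fin n → Fin 2 → ℝ) (hopt : IsOptimal P) (i : Fin n) (δ : ℝ)
    (hδ : 0 < δ) (c c' : Fin 2) (hcc : c' ≠ c)
    (hprod : ∀ r : Fin 2 → ℝ, ∏ j, r j = r c * r c')
    (hjc : ∀ j : Fin 2, j ≠ c → j = c')
    (hδ1 : δ ≤ 1 - P i c)
    (hadm : (∃ k, k ≠ i ∧ ∀ j, P k j ≤ P i j) ∧
      δ ≤ 1 / n - sInf {t : ℝ | ∃ k, k ≠ i ∧ (∀ j, P k j ≤ P i j) ∧ t = P i c - P k c})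
    (P' : Fin n → Fin 2 → ℝ)
    (hP'def : P' = Function.update P i (fun j => P i j + if j = c then δ else 0)) :
    starDisc P' ≤ starDisc P ∧ IsOptimal P' := by
  obtain ⟨⟨k0, hk0i, hk0⟩, hδle⟩ := hadm
  have hP'i : ∀ j, P' i j = P i j + if j = c then δ else 0 := by
    intro j; rw [hP'def, Function.update_self]
  have hP'm : ∀ m, m ≠ i → P' m = P m := by
    intro m hm; rw [hP'def, Function.update_of_ne hm]
  -- extract witness attaining the infimum
  set S : Set ℝ := {t : ℝ | ∃ k, k ≠ i ∧ (∀ j, P k j ≤ P i j) ∧ t = P i c - P k c} with hS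
  have hne : S.Nonempty := ⟨P i c - P k0 c, k0, hk0i, hk0, rfl⟩
  have hfin : S.Finite := by
    apply (Set.finite_range (fun k : Fin n => P i c - P k c)).subset
    rintro t ⟨k, _, _, rfl⟩
    exact ⟨k, rfl⟩
  obtain ⟨k, hki, hk, hkeq⟩ := hne.csInf_mem hfin
  have hkc : P i c - P k c ≤ 1 / (n:ℝ) - δ := by rw [← hkeq]; linarith
  have hled : starDisc P' ≤ starDisc P :=
    shift_le P hopt.1 i δ hδ c c' hcc hprod hjc P' hP'i hP'm k hki hk hkc
  refine ⟨hled, ?_, ?_⟩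
  · intro m j
    by_cases hm : m = i
    · rw [hm, hP'i j]
      have h1 := hopt.1 i j
      constructor
      · have h2 : (0:ℝ) ≤ if j = c then δ else 0 := by split <;> linarith
        linarith [h1.1]
      · by_cases hj : j = c
        · have hval : (if j = c then δ else 0) = δ := if_pos hj
          rw [hval, hj]; linarith [(hopt.1 i c).2]
        · simp only [if_neg hj]; linarith [h1.2]
    · rw [hP'm m hm]; exact hopt.1 m j
  · intro Q hQ
    exact hled.trans (hopt.2 Q hQ)

theorem stmt_8 {n : ℕ} (P : Fin n → Fin 2 → ℝ) (hopt : IsOptimal P) (i : Fin n) (δ : ℝ) :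
    (0 < δ → δ ≤ 1 - P i 1 → AdmissibleUp P i δ →
      starDisc (upShift P i δ) ≤ starDisc P ∧ IsOptimal (upShift P i δ)) ∧
    (0 < δ → δ ≤ 1 - P i 0 → AdmissibleRight P i δ →
      starDisc (rightShift P i δ) ≤ starDisc P ∧ IsOptimal (rightShift P i δ)) := by
  constructor
  · intro hδ hδ1 hadm
    exact shift_main P hopt i δ hδ 1 0 (by decide) (fun r => by rw [Fin.prod_univ_two, mul_comm])
      (by decide) hδ1 hadm (upShift P i δ) rfl
  · intro hδ hδ1 hadm
    exact shift_main P hopt i δ hδ 0 1 (by decide) (fun r => by rw [Fin.prod_univ_two])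
      (by decide) hδ1 hadm (rightShift P i δ) rfl
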